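/- arXiv:1705.04123 — 8 statements merged into one kernel-verified Lean document; each statement's English description precedes it below -/
import Mathlib

section
/- The discrete fractional Sturm–Liouville operator L₁ within nabla Riemann–Liouville fractional differences is self-adjoint: for any real-valued functions u, v defined on the integers, ∑_{s=a+1}^{b-1} u(s)·(L₁v)(s) = ∑_{s=a+1}^{b-1} v(s)·(L₁u)(s); equivalently ⟨L₁u, v⟩ = ⟨u, L₁v⟩ in the inner product ⟨x,y⟩ = ∑_{s=a+1}^{b-1} x(s)y(s). -/
/-- Rising factorial `t^{overline α} = Γ(t+α)/Γ(t)`. -/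
noncomputable def risingFac (t α : ℝ) : ℝ := Real.Gamma (t + α) / Real.Gamma t

/-- Nabla left Riemann–Liouville fractional difference of order `μ`:
`∇_a^μ x(t) = ∇[ (1/Γ(1−μ)) ∑_{s=a+1}^{t} (t−ρ(s))^{overline{−μ}} x(s) ]`. -/
noncomputable def nablaLeftRL (μ : ℝ) (a : ℤ) (x : ℤ → ℝ) (t : ℤ) : ℝ :=
  (1 / Real.Gamma (1 - μ)) *
      ∑ s ∈ Finset.Icc (a + 1) t, risingFac ((t - (s - 1) : ℤ) : ℝ) (-μ) * x s -
    (1 / Real.Gamma (1 - μ)) *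
      ∑ s ∈ Finset.Icc (a + 1) (t - 1), risingFac (((t - 1) - (s - 1) : ℤ) : ℝ) (-μ) * x s

/-- Nabla right Riemann–Liouville fractional difference of order `μ`:
`_b∇^μ x(t) = −Δ[ (1/Γ(1−μ)) ∑_{s=t}^{b−1} (s−ρ(t))^{overline{−μ}} x(s) ]`. -/
noncomputable def nablaRightRL (μ : ℝ) (b : ℤ) (x : ℤ → ℝ) (t : ℤ) : ℝ :=
  -((1 / Real.Gamma (1 - μ)) *
        ∑ s ∈ Finset.Icc (t + 1) (b - 1), risingFac ((s - ((t + 1) - 1) : ℤ) : ℝ) (-μ) * x s -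
      (1 / Real.Gamma (1 - μ)) *
        ∑ s ∈ Finset.Icc t (b - 1), risingFac ((s - (t - 1) : ℤ) : ℝ) (-μ) * x s)

/-- The discrete fractional Sturm–Liouville operator
`L₁x(t) = ∇_a^μ( p(t) · (_b∇^μ x)(t) ) + q(t)x(t)`. -/
noncomputable def L1 (μ : ℝ) (a b : ℤ) (p q : ℤ → ℝ) (x : ℤ → ℝ) (t : ℤ) : ℝ :=
  nablaLeftRL μ a (fun τ => p τ * nablaRightRL μ b x τ) t + q t * x t

lemma risingFac_zero (α : ℝ) : risingFac 0 α = 0 := by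
  simp [risingFac, Real.Gamma_zero]

/-- kernel -/
noncomputable def Dker (μ : ℝ) (k : ℤ) : ℝ :=
  (1 / Real.Gamma (1 - μ)) * risingFac ((k : ℝ) + 1) (-μ) -
    (1 / Real.Gamma (1 - μ)) * risingFac ((k : ℝ)) (-μ)

lemma nablaLeftRL_eq (μ : ℝ) (a : ℤ) (x : ℤ → ℝ) (t : ℤ) :
    nablaLeftRL μ a x t = ∑ s ∈ Finset.Icc (a + 1) t, Dker μ (t - s) * x s := by
  unfold nablaLeftRL
  have h2 : ∑ s ∈ Finset.Icc (a + 1) (t - 1),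
        risingFac (((t - 1) - (s - 1) : ℤ) : ℝ) (-μ) * x s =
      ∑ s ∈ Finset.Icc (a + 1) t, risingFac ((t - s : ℤ) : ℝ) (-μ) * x s := by
    rw [show (∑ s ∈ Finset.Icc (a + 1) (t - 1),
        risingFac (((t - 1) - (s - 1) : ℤ) : ℝ) (-μ) * x s) =
        ∑ s ∈ Finset.Icc (a + 1) (t - 1), risingFac ((t - s : ℤ) : ℝ) (-μ) * x s from
      Finset.sum_congr rfl fun s _ => by norm_num]
    refine Finset.sum_subset (Finset.Icc_subset_Icc_right (show (t-1:ℤ) ≤ t by omega)) ?_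
    intro s hs hs'
    simp only [Finset.mem_Icc] at hs hs'
    have : s = t := by omega
    subst this
    simp [risingFac_zero]
  rw [h2, Finset.mul_sum, Finset.mul_sum, ← Finset.sum_sub_distrib]
  refine Finset.sum_congr rfl fun s _ => ?_
  have : ((t - (s - 1) : ℤ) : ℝ) = ((t - s : ℤ) : ℝ) + 1 := by push_cast; ring
  rw [this, Dker]; ring

lemma nablaRightRL_eq (μ : ℝ) (b : ℤ) (x : ℤ → ℝ) (t : ℤ) :
    nablaRightRL μ b x t = ∑ s ∈ Finset.Icc t (b - 1), Dker μ (s - t) * x s := by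
  unfold nablaRightRL
  have h2 : ∑ s ∈ Finset.Icc (t + 1) (b - 1),
        risingFac ((s - ((t + 1) - 1) : ℤ) : ℝ) (-μ) * x s =
      ∑ s ∈ Finset.Icc t (b - 1), risingFac ((s - t : ℤ) : ℝ) (-μ) * x s := by
    rw [show (∑ s ∈ Finset.Icc (t + 1) (b - 1),
        risingFac ((s - ((t + 1) - 1) : ℤ) : ℝ) (-μ) * x s) =
        ∑ s ∈ Finset.Icc (t + 1) (b - 1), risingFac ((s - t : ℤ) : ℝ) (-μ) * x s from
      Finset.sum_congr rfl fun s _ => by norm_num]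
    refine Finset.sum_subset (Finset.Icc_subset_Icc_left (show (t:ℤ) ≤ t+1 by omega)) ?_
    intro s hs hs'
    simp only [Finset.mem_Icc] at hs hs'
    have : s = t := by omega
    subst this
    simp [risingFac_zero]
  rw [h2, neg_sub, Finset.mul_sum, Finset.mul_sum, ← Finset.sum_sub_distrib]
  refine Finset.sum_congr rfl fun s _ => ?_
  have : ((s - (t - 1) : ℤ) : ℝ) = ((s - t : ℤ) : ℝ) + 1 := by push_cast; ring
  rw [this, Dker]; ring

lemma sum_parts (μ : ℝ) (a b : ℤ) (u y : ℤ → ℝ) :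
    ∑ t ∈ Finset.Icc (a + 1) (b - 1), u t * nablaLeftRL μ a y t =
      ∑ t ∈ Finset.Icc (a + 1) (b - 1), y t * nablaRightRL μ b u t := by
  simp only [nablaLeftRL_eq, nablaRightRL_eq, Finset.mul_sum]
  rw [Finset.sum_comm' (s := Finset.Icc (a+1) (b-1)) (t := fun t => Finset.Icc (a+1) t)
    (t' := Finset.Icc (a+1) (b-1)) (s' := fun s => Finset.Icc s (b-1))
    (by intro x y; simp only [Finset.mem_Icc]; omega)]
  refine Finset.sum_congr rfl fun s _ => Finset.sum_congr rfl fun t _ => ?_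
  ring


/-- The DFSL operator `L₁` is self-adjoint:
`⟨L₁u, v⟩ = ⟨u, L₁v⟩` for the inner product `⟨x,y⟩ = ∑_{s=a+1}^{b−1} x(s)y(s)`. -/
theorem L1_selfAdjoint (μ : ℝ) (hμ0 : 0 < μ) (hμ1 : μ < 1) (a b : ℤ) (hab : a < b)
    (p q r : ℤ → ℝ) (hp : ∀ t, 0 < p t) (hr : ∀ t, 0 < r t) (u v : ℤ → ℝ) :
    ∑ s ∈ Finset.Icc (a + 1) (b - 1), u s * L1 μ a b p q v s =
      ∑ s ∈ Finset.Icc (a + 1) (b - 1), v s * L1 μ a b p q u s := by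
  simp only [L1, mul_add, Finset.sum_add_distrib]
  rw [sum_parts μ a b u (fun τ => p τ * nablaRightRL μ b v τ),
      sum_parts μ a b v (fun τ => p τ * nablaRightRL μ b u τ)]
  congr 1
  · refine Finset.sum_congr rfl fun s _ => ?_; ring
  · refine Finset.sum_congr rfl fun s _ => ?_; ring
end

section
/- Eigenfunctions of the nabla Riemann–Liouville discrete fractional Sturm–Liouville equation corresponding to distinct eigenvalues are orthogonal with respect to the weight r: if L₁u(t) = λ_α r(t)u(t) and L₁v(t) = λ_β r(t)v(t) hold for all t with a+1 ≤ t ≤ b−1, and λ_α ≠ λ_β, then ∑_{s=a+1}^{b-1} r(s)u(s)v(s) = 0. -/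
lemma sbp (μ : ℝ) (a b : ℤ) (f g : ℤ → ℝ) :
    ∑ t ∈ Finset.Icc (a + 1) (b - 1), f t * nablaLeftRL μ a g t
      = ∑ t ∈ Finset.Icc (a + 1) (b - 1), g t * nablaRightRL μ b f t := by
  unfold nablaLeftRL nablaRightRL
  set c := 1 / Real.Gamma (1 - μ) with hc
  have key1 :
      ∑ t ∈ Finset.Icc (a + 1) (b - 1), ∑ s ∈ Finset.Icc (a + 1) t,
        c * risingFac ((t - (s - 1) : ℤ) : ℝ) (-μ) * f t * g s
        = ∑ t ∈ Finset.Icc (a + 1) (b - 1), ∑ s ∈ Finset.Icc t (b - 1),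
        c * risingFac ((s - (t - 1) : ℤ) : ℝ) (-μ) * f s * g t := by
    rw [Finset.sum_comm' (t' := Finset.Icc (a + 1) (b - 1))
      (s' := fun y => Finset.Icc y (b - 1))
      (by intro x y; simp only [Finset.mem_Icc]; omega)]
  have key2 :
      ∑ t ∈ Finset.Icc (a + 1) (b - 1), ∑ s ∈ Finset.Icc (a + 1) (t - 1),
        c * risingFac (((t - 1) - (s - 1) : ℤ) : ℝ) (-μ) * f t * g s
        = ∑ t ∈ Finset.Icc (a + 1) (b - 1), ∑ s ∈ Finset.Icc (t + 1) (b - 1),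
        c * risingFac ((s - ((t + 1) - 1) : ℤ) : ℝ) (-μ) * f s * g t := by
    have := Finset.sum_comm' (s := Finset.Icc (a + 1) (b - 1))
      (t := fun x => Finset.Icc (a + 1) (x - 1))
      (t' := Finset.Icc (a + 1) (b - 1))
      (s' := fun y => Finset.Icc (y + 1) (b - 1))
      (f := fun x y => c * risingFac (((x - 1) - (y - 1) : ℤ) : ℝ) (-μ) * f x * g y)
      (by intro x y; simp only [Finset.mem_Icc]; omega)
    rw [this]
    apply Finset.sum_congr rfl; intro t _; apply Finset.sum_congr rfl; intro s _
    norm_num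
  calc ∑ t ∈ Finset.Icc (a + 1) (b - 1),
        f t * (c * ∑ s ∈ Finset.Icc (a + 1) t, risingFac ((t - (s - 1) : ℤ) : ℝ) (-μ) * g s -
          c * ∑ s ∈ Finset.Icc (a + 1) (t - 1), risingFac (((t - 1) - (s - 1) : ℤ) : ℝ) (-μ) * g s)
      = ∑ t ∈ Finset.Icc (a + 1) (b - 1), ((∑ s ∈ Finset.Icc (a + 1) t,
          c * risingFac ((t - (s - 1) : ℤ) : ℝ) (-μ) * f t * g s) -
          ∑ s ∈ Finset.Icc (a + 1) (t - 1),
          c * risingFac (((t - 1) - (s - 1) : ℤ) : ℝ) (-μ) * f t * g s) := by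
        apply Finset.sum_congr rfl; intro t _
        rw [mul_sub, Finset.mul_sum, Finset.mul_sum, Finset.mul_sum, Finset.mul_sum]
        congr 1 <;> (apply Finset.sum_congr rfl; intro s _; ring)
    _ = (∑ t ∈ Finset.Icc (a + 1) (b - 1), ∑ s ∈ Finset.Icc (a + 1) t,
          c * risingFac ((t - (s - 1) : ℤ) : ℝ) (-μ) * f t * g s) -
        ∑ t ∈ Finset.Icc (a + 1) (b - 1), ∑ s ∈ Finset.Icc (a + 1) (t - 1),
          c * risingFac (((t - 1) - (s - 1) : ℤ) : ℝ) (-μ) * f t * g s :=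
        Finset.sum_sub_distrib _ _
    _ = (∑ t ∈ Finset.Icc (a + 1) (b - 1), ∑ s ∈ Finset.Icc t (b - 1),
          c * risingFac ((s - (t - 1) : ℤ) : ℝ) (-μ) * f s * g t) -
        ∑ t ∈ Finset.Icc (a + 1) (b - 1), ∑ s ∈ Finset.Icc (t + 1) (b - 1),
          c * risingFac ((s - ((t + 1) - 1) : ℤ) : ℝ) (-μ) * f s * g t := by
        rw [key1, key2]
    _ = ∑ t ∈ Finset.Icc (a + 1) (b - 1),
        g t * -((c * ∑ s ∈ Finset.Icc (t + 1) (b - 1),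
            risingFac ((s - ((t + 1) - 1) : ℤ) : ℝ) (-μ) * f s) -
          c * ∑ s ∈ Finset.Icc t (b - 1), risingFac ((s - (t - 1) : ℤ) : ℝ) (-μ) * f s) := by
        rw [← Finset.sum_sub_distrib]
        apply Finset.sum_congr rfl; intro t _
        simp only [neg_sub, mul_sub, Finset.mul_sum]
        congr 1 <;> (apply Finset.sum_congr rfl; intro s _; ring)

/-- Eigenfunctions of the nabla R-L DFSL equation corresponding to distinct
eigenvalues are orthogonal with respect to the weight `r`. -/
theorem L1_eigenfunctions_orthogonal (μ : ℝ) (hμ0 : 0 < μ) (hμ1 : μ < 1)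
    (a b : ℤ) (hab : a < b) (p q r : ℤ → ℝ) (hp : ∀ t, 0 < p t) (hr : ∀ t, 0 < r t)
    (u v : ℤ → ℝ) (lα lβ : ℝ) (hαβ : lα ≠ lβ)
    (hu : ∀ t ∈ Finset.Icc (a + 1) (b - 1), L1 μ a b p q u t = lα * (r t * u t))
    (hv : ∀ t ∈ Finset.Icc (a + 1) (b - 1), L1 μ a b p q v t = lβ * (r t * v t)) :
    ∑ s ∈ Finset.Icc (a + 1) (b - 1), r s * u s * v s = 0 := by
  set I := Finset.Icc (a + 1) (b - 1) with hI
  have h1 : ∑ t ∈ I, (v t * L1 μ a b p q u t - u t * L1 μ a b p q v t)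
      = (lα - lβ) * ∑ s ∈ I, r s * u s * v s := by
    rw [Finset.mul_sum]
    apply Finset.sum_congr rfl; intro t ht
    rw [hu t ht, hv t ht]; ring
  have h2 : ∑ t ∈ I, (v t * L1 μ a b p q u t - u t * L1 μ a b p q v t)
      = ∑ t ∈ I, v t * nablaLeftRL μ a (fun τ => p τ * nablaRightRL μ b u τ) t
        - ∑ t ∈ I, u t * nablaLeftRL μ a (fun τ => p τ * nablaRightRL μ b v τ) t := by
    rw [← Finset.sum_sub_distrib]
    apply Finset.sum_congr rfl; intro t ht
    unfold L1; ring
  rw [h2, sbp, sbp] at h1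
  have h3 : ∑ t ∈ I, (p t * nablaRightRL μ b u t) * nablaRightRL μ b v t
      - ∑ t ∈ I, (p t * nablaRightRL μ b v t) * nablaRightRL μ b u t = 0 := by
    rw [← Finset.sum_sub_distrib]
    apply Finset.sum_eq_zero; intro t _; ring
  rw [h3] at h1
  rcases mul_eq_zero.mp h1.symm with h | h
  · exact absurd (sub_eq_zero.mp h) hαβ
  · exact h
end

section
/- All eigenvalues of the nabla Riemann–Liouville discrete fractional Sturm–Liouville equation are real: if u is a complex-valued function, not identically zero on {a+1,…,b−1}, and λ ∈ ℂ satisfies L₁u(t) = λ r(t)u(t) for all t with a+1 ≤ t ≤ b−1, then λ is real (its imaginary part vanishes). -/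
/-- Nabla left Riemann–Liouville fractional difference of order `μ` (complex-valued). -/
noncomputable def nablaLeftRLC (μ : ℝ) (a : ℤ) (x : ℤ → ℂ) (t : ℤ) : ℂ :=
  (1 / (Real.Gamma (1 - μ) : ℂ)) *
      ∑ s ∈ Finset.Icc (a + 1) t, (risingFac ((t - (s - 1) : ℤ) : ℝ) (-μ) : ℂ) * x s -
    (1 / (Real.Gamma (1 - μ) : ℂ)) *
      ∑ s ∈ Finset.Icc (a + 1) (t - 1), (risingFac (((t - 1) - (s - 1) : ℤ) : ℝ) (-μ) : ℂ) * x s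

/-- Nabla right Riemann–Liouville fractional difference of order `μ` (complex-valued). -/
noncomputable def nablaRightRLC (μ : ℝ) (b : ℤ) (x : ℤ → ℂ) (t : ℤ) : ℂ :=
  -((1 / (Real.Gamma (1 - μ) : ℂ)) *
        ∑ s ∈ Finset.Icc (t + 1) (b - 1), (risingFac ((s - ((t + 1) - 1) : ℤ) : ℝ) (-μ) : ℂ) * x s -
      (1 / (Real.Gamma (1 - μ) : ℂ)) *
        ∑ s ∈ Finset.Icc t (b - 1), (risingFac ((s - (t - 1) : ℤ) : ℝ) (-μ) : ℂ) * x s)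

/-- The discrete fractional Sturm–Liouville operator `L₁` with real coefficients
`p, q`, acting on complex-valued functions. -/
noncomputable def L1C (μ : ℝ) (a b : ℤ) (p q : ℤ → ℝ) (x : ℤ → ℂ) (t : ℤ) : ℂ :=
  nablaLeftRLC μ a (fun τ => (p τ : ℂ) * nablaRightRLC μ b x τ) t + (q t : ℂ) * x t

/-- The common real kernel of the left and right fractional differences. -/
noncomputable def Kc (μ : ℝ) (t s : ℤ) : ℂ :=
  (1 / (Real.Gamma (1 - μ) : ℂ)) *
    ((risingFac ((t - s + 1 : ℤ) : ℝ) (-μ) : ℂ) - (risingFac ((t - s : ℤ) : ℝ) (-μ) : ℂ))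

lemma risingFac_int_nonpos (μ : ℝ) (n : ℤ) (hn : n ≤ 0) : risingFac (n : ℝ) (-μ) = 0 := by
  have h : Real.Gamma (n : ℝ) = 0 := by
    have h2 : ((-n).toNat : ℤ) = -n := Int.toNat_of_nonneg (by omega)
    have : ((n : ℝ)) = -((-n).toNat : ℕ) := by
      exact_mod_cast (by omega : n = -(((-n).toNat : ℤ)))
    rw [this]
    exact Real.Gamma_neg_nat_eq_zero _
  unfold risingFac
  rw [h, div_zero]

lemma Kc_conj (μ : ℝ) (t s : ℤ) : (starRingEnd ℂ) (Kc μ t s) = Kc μ t s := by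
  simp [Kc, ← Complex.ofReal_sub, ← Complex.ofReal_one, ← Complex.ofReal_div,
    Complex.conj_ofReal]

lemma left_expand (μ : ℝ) (a b : ℤ) (x : ℤ → ℂ) (t : ℤ) (ht1 : a + 1 ≤ t) (ht2 : t ≤ b - 1) :
    nablaLeftRLC μ a x t = ∑ s ∈ Finset.Icc (a + 1) (b - 1), Kc μ t s * x s := by
  have h1 : ∑ s ∈ Finset.Icc (a + 1) t, (risingFac ((t - (s - 1) : ℤ) : ℝ) (-μ) : ℂ) * x s
      = ∑ s ∈ Finset.Icc (a + 1) (b - 1), (risingFac ((t - s + 1 : ℤ) : ℝ) (-μ) : ℂ) * x s := by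
    rw [show ∀ S : Finset ℤ, (∑ s ∈ S, (risingFac ((t - (s - 1) : ℤ) : ℝ) (-μ) : ℂ) * x s)
        = ∑ s ∈ S, (risingFac ((t - s + 1 : ℤ) : ℝ) (-μ) : ℂ) * x s from fun S =>
      Finset.sum_congr rfl fun s _ => by rw [show t - (s - 1) = t - s + 1 by ring]]
    refine Finset.sum_subset (fun s hs => ?_) (fun s hs hns => ?_)
    · simp only [Finset.mem_Icc] at hs ⊢; omega
    · simp only [Finset.mem_Icc] at hs hns
      rw [risingFac_int_nonpos μ _ (by omega : t - s + 1 ≤ 0)]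
      simp
  have h2 : ∑ s ∈ Finset.Icc (a + 1) (t - 1),
        (risingFac (((t - 1) - (s - 1) : ℤ) : ℝ) (-μ) : ℂ) * x s
      = ∑ s ∈ Finset.Icc (a + 1) (b - 1), (risingFac ((t - s : ℤ) : ℝ) (-μ) : ℂ) * x s := by
    rw [show ∀ S : Finset ℤ, (∑ s ∈ S, (risingFac (((t - 1) - (s - 1) : ℤ) : ℝ) (-μ) : ℂ) * x s)
        = ∑ s ∈ S, (risingFac ((t - s : ℤ) : ℝ) (-μ) : ℂ) * x s from fun S =>
      Finset.sum_congr rfl fun s _ => by rw [show (t - 1) - (s - 1) = t - s by ring]]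
    refine Finset.sum_subset (fun s hs => ?_) (fun s hs hns => ?_)
    · simp only [Finset.mem_Icc] at hs ⊢; omega
    · simp only [Finset.mem_Icc] at hs hns
      rw [risingFac_int_nonpos μ _ (by omega : t - s ≤ 0)]
      simp
  unfold nablaLeftRLC
  rw [h1, h2, Finset.mul_sum, Finset.mul_sum, ← Finset.sum_sub_distrib]
  refine Finset.sum_congr rfl fun s _ => ?_
  unfold Kc
  ring

lemma right_expand (μ : ℝ) (a b : ℤ) (x : ℤ → ℂ) (t : ℤ) (ht1 : a + 1 ≤ t) (ht2 : t ≤ b - 1) :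
    nablaRightRLC μ b x t = ∑ s ∈ Finset.Icc (a + 1) (b - 1), Kc μ s t * x s := by
  have h1 : ∑ s ∈ Finset.Icc t (b - 1), (risingFac ((s - (t - 1) : ℤ) : ℝ) (-μ) : ℂ) * x s
      = ∑ s ∈ Finset.Icc (a + 1) (b - 1), (risingFac ((s - t + 1 : ℤ) : ℝ) (-μ) : ℂ) * x s := by
    rw [show ∀ S : Finset ℤ, (∑ s ∈ S, (risingFac ((s - (t - 1) : ℤ) : ℝ) (-μ) : ℂ) * x s)
        = ∑ s ∈ S, (risingFac ((s - t + 1 : ℤ) : ℝ) (-μ) : ℂ) * x s from fun S =>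
      Finset.sum_congr rfl fun s _ => by rw [show s - (t - 1) = s - t + 1 by ring]]
    refine Finset.sum_subset (fun s hs => ?_) (fun s hs hns => ?_)
    · simp only [Finset.mem_Icc] at hs ⊢; omega
    · simp only [Finset.mem_Icc] at hs hns
      rw [risingFac_int_nonpos μ _ (by omega : s - t + 1 ≤ 0)]
      simp
  have h2 : ∑ s ∈ Finset.Icc (t + 1) (b - 1),
        (risingFac ((s - ((t + 1) - 1) : ℤ) : ℝ) (-μ) : ℂ) * x s
      = ∑ s ∈ Finset.Icc (a + 1) (b - 1), (risingFac ((s - t : ℤ) : ℝ) (-μ) : ℂ) * x s := by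
    rw [show ∀ S : Finset ℤ, (∑ s ∈ S, (risingFac ((s - ((t + 1) - 1) : ℤ) : ℝ) (-μ) : ℂ) * x s)
        = ∑ s ∈ S, (risingFac ((s - t : ℤ) : ℝ) (-μ) : ℂ) * x s from fun S =>
      Finset.sum_congr rfl fun s _ => by rw [show s - ((t + 1) - 1) = s - t by ring]]
    refine Finset.sum_subset (fun s hs => ?_) (fun s hs hns => ?_)
    · simp only [Finset.mem_Icc] at hs ⊢; omega
    · simp only [Finset.mem_Icc] at hs hns
      rw [risingFac_int_nonpos μ _ (by omega : s - t ≤ 0)]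
      simp
  unfold nablaRightRLC
  rw [h1, h2, Finset.mul_sum, Finset.mul_sum, neg_sub, ← Finset.sum_sub_distrib]
  refine Finset.sum_congr rfl fun s _ => ?_
  unfold Kc
  ring

/-- All eigenvalues of the nabla R-L DFSL equation are real. -/
theorem L1_eigenvalues_real (μ : ℝ) (hμ0 : 0 < μ) (hμ1 : μ < 1)
    (a b : ℤ) (hab : a < b) (p q r : ℤ → ℝ) (hp : ∀ t, 0 < p t) (hr : ∀ t, 0 < r t)
    (u : ℤ → ℂ) (hu0 : ∃ t ∈ Finset.Icc (a + 1) (b - 1), u t ≠ 0) (lam : ℂ)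
    (hu : ∀ t ∈ Finset.Icc (a + 1) (b - 1), L1C μ a b p q u t = lam * ((r t : ℂ) * u t)) :
    lam.im = 0 := by
  classical
  set I : Finset ℤ := Finset.Icc (a + 1) (b - 1) with hIdef
  -- the "right difference" vector
  set w : ℤ → ℂ := fun τ => ∑ s ∈ I, Kc μ s τ * u s with hwdef
  have hwconj : ∀ τ, (starRingEnd ℂ) (w τ) = ∑ s ∈ I, Kc μ s τ * (starRingEnd ℂ) (u s) := by
    intro τ
    rw [hwdef]
    simp only [map_sum, map_mul, Kc_conj]
  -- expansion of L1C on the window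
  have hL1 : ∀ t ∈ I, L1C μ a b p q u t
      = (∑ τ ∈ I, Kc μ t τ * ((p τ : ℂ) * w τ)) + (q t : ℂ) * u t := by
    intro t ht
    simp only [hIdef, Finset.mem_Icc] at ht
    unfold L1C
    rw [left_expand μ a b _ t ht.1 ht.2]
    congr 1
    refine Finset.sum_congr rfl fun τ hτ => ?_
    simp only [hIdef, Finset.mem_Icc] at hτ
    rw [right_expand μ a b u τ hτ.1 hτ.2]
  -- the quadratic form
  set S : ℂ := ∑ t ∈ I, (starRingEnd ℂ) (u t) * L1C μ a b p q u t with hSdef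
  have hS1 : S = (∑ τ ∈ I, (p τ : ℂ) * ((starRingEnd ℂ) (w τ) * w τ))
      + ∑ t ∈ I, (q t : ℂ) * ((starRingEnd ℂ) (u t) * u t) := by
    rw [hSdef, Finset.sum_congr rfl fun t ht => by rw [hL1 t ht]]
    simp only [mul_add, Finset.sum_add_distrib]
    congr 1
    · rw [Finset.sum_congr rfl fun t (_ : t ∈ I) =>
        Finset.mul_sum I (fun τ => Kc μ t τ * ((p τ : ℂ) * w τ)) ((starRingEnd ℂ) (u t)),
        Finset.sum_comm]
      refine Finset.sum_congr rfl fun τ _ => ?_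
      rw [hwconj τ, Finset.sum_mul,
        Finset.mul_sum I (fun t => Kc μ t τ * (starRingEnd ℂ) (u t) * w τ) ((p τ : ℂ))]
      exact Finset.sum_congr rfl fun t _ => by ring
    · exact Finset.sum_congr rfl fun t ht => by ring
  have hSim : S.im = 0 := by
    rw [hS1]
    rw [Complex.add_im]
    have e1 : ∀ τ ∈ I, ((p τ : ℂ) * ((starRingEnd ℂ) (w τ) * w τ)).im = 0 := by
      intro τ _
      rw [mul_comm ((starRingEnd ℂ) (w τ)) (w τ), Complex.mul_conj, ← Complex.ofReal_mul]
      exact Complex.ofReal_im _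
    have e2 : ∀ t ∈ I, ((q t : ℂ) * ((starRingEnd ℂ) (u t) * u t)).im = 0 := by
      intro t _
      rw [mul_comm ((starRingEnd ℂ) (u t)) (u t), Complex.mul_conj, ← Complex.ofReal_mul]
      exact Complex.ofReal_im _
    rw [Complex.im_sum, Complex.im_sum, Finset.sum_congr rfl e1, Finset.sum_congr rfl e2]
    simp
  -- the eigenvalue identity
  set R : ℝ := ∑ t ∈ I, r t * Complex.normSq (u t) with hRdef
  have hS2 : S = lam * (R : ℂ) := by
    rw [hSdef, Finset.sum_congr rfl fun t ht => by rw [hu t ht]]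
    rw [hRdef]
    push_cast
    rw [Finset.mul_sum]
    refine Finset.sum_congr rfl fun t ht => ?_
    rw [show (starRingEnd ℂ) (u t) * (lam * ((r t : ℂ) * u t))
        = lam * ((r t : ℂ) * ((starRingEnd ℂ) (u t) * u t)) by ring]
    rw [mul_comm ((starRingEnd ℂ) (u t)) (u t), Complex.mul_conj]
  have hRpos : 0 < R := by
    obtain ⟨t0, ht0, hu0⟩ := hu0
    refine Finset.sum_pos' (fun t _ => mul_nonneg (hr t).le (Complex.normSq_nonneg _)) ?_
    exact ⟨t0, ht0, mul_pos (hr t0) (Complex.normSq_pos.mpr hu0)⟩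
  have : lam.im * R = 0 := by
    have := hSim
    rw [hS2] at this
    simpa [Complex.mul_im] using this
  exact by
    rcases mul_eq_zero.mp this with h | h
    · exact h
    · exact absurd h hRpos.ne'
end

section
/- The discrete fractional Sturm–Liouville operator L₂ within Grünwald–Letnikov delta fractional differences is self-adjoint: for any real-valued functions u, v defined on {0,1,…,N}, ∑_{s=0}^{N} u(s)·(L₂v)(s) = ∑_{s=0}^{N} v(s)·(L₂u)(s); equivalently ⟨L₂u, v⟩ = ⟨u, L₂v⟩ in the inner product ⟨x,y⟩ = ∑_{s=0}^{N} x(s)y(s). -/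
/-- The Grünwald–Letnikov coefficient `(−1)^s · μ(μ−1)⋯(μ−s+1)/s!`. -/
noncomputable def glCoef (μ : ℝ) (s : ℕ) : ℝ :=
  (-1 : ℝ) ^ s * (∏ i ∈ Finset.range s, (μ - i)) / (Nat.factorial s)

/-- G-L delta left fractional difference:
`Δ₋^μ x(t) = ∑_{s=0}^{t} (−1)^s (μ(μ−1)⋯(μ−s+1)/s!) x(t−s)`. -/
noncomputable def deltaMinusGL (μ : ℝ) (x : ℕ → ℝ) (t : ℕ) : ℝ :=
  ∑ s ∈ Finset.range (t + 1), glCoef μ s * x (t - s)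

/-- G-L delta right fractional difference:
`Δ₊^μ x(t) = ∑_{s=0}^{N−t} (−1)^s (μ(μ−1)⋯(μ−s+1)/s!) x(t+s)`. -/
noncomputable def deltaPlusGL (μ : ℝ) (N : ℕ) (x : ℕ → ℝ) (t : ℕ) : ℝ :=
  ∑ s ∈ Finset.range (N - t + 1), glCoef μ s * x (t + s)

/-- The discrete fractional Sturm–Liouville operator
`L₂x(t) = Δ₋^μ( p·Δ₊^μ x )(t) + q(t)x(t)`. -/
noncomputable def L2 (μ : ℝ) (N : ℕ) (p q : ℕ → ℝ) (x : ℕ → ℝ) (t : ℕ) : ℝ :=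
  deltaMinusGL μ (fun τ => p τ * deltaPlusGL μ N x τ) t + q t * x t

/-- Summation by parts: `⟨u, Δ₋^μ w⟩ = ⟨w, Δ₊^μ u⟩` on `{0,…,N}`. -/
lemma sum_deltaMinus_eq (μ : ℝ) (N : ℕ) (u w : ℕ → ℝ) :
    ∑ t ∈ Finset.range (N + 1), u t * deltaMinusGL μ w t =
      ∑ τ ∈ Finset.range (N + 1), w τ * deltaPlusGL μ N u τ := by
  have L : ∀ t ∈ Finset.range (N + 1),
      u t * deltaMinusGL μ w t =
        ∑ j ∈ Finset.range (N + 1),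
          (if j ≤ t then glCoef μ (t - j) * w j * u t else 0) := by
    intro t ht
    simp only [Finset.mem_range] at ht
    rw [deltaMinusGL, Finset.mul_sum]
    rw [← Finset.sum_range_reflect (fun s => u t * (glCoef μ s * w (t - s))) (t + 1)]
    rw [← Finset.sum_filter]
    have hfil : (Finset.range (N + 1)).filter (fun j => j ≤ t) = Finset.range (t + 1) := by
      ext j; simp [Finset.mem_filter, Finset.mem_range]; omega
    rw [hfil]
    apply Finset.sum_congr rfl
    intro j hj
    simp only [Finset.mem_range] at hj
    have h1 : t + 1 - 1 - j = t - j := by omega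
    have h2 : t - (t - j) = j := by omega
    rw [h1, h2]; ring
  have R : ∀ τ ∈ Finset.range (N + 1),
      w τ * deltaPlusGL μ N u τ =
        ∑ t ∈ Finset.range (N + 1),
          (if τ ≤ t then glCoef μ (t - τ) * w τ * u t else 0) := by
    intro τ hτ
    simp only [Finset.mem_range] at hτ
    rw [deltaPlusGL, Finset.mul_sum]
    rw [← Finset.sum_filter]
    have hfil : (Finset.range (N + 1)).filter (fun t => τ ≤ t) = Finset.Icc τ N := by
      ext t; simp [Finset.mem_filter, Finset.mem_range]; omega
    rw [hfil, ← Finset.Ico_add_one_right_eq_Icc, Finset.sum_Ico_eq_sum_range]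
    have hlen : N + 1 - τ = N - τ + 1 := by omega
    rw [hlen]
    apply Finset.sum_congr rfl
    intro s hs
    have h1 : τ + s - τ = s := by omega
    rw [h1]; ring
  rw [Finset.sum_congr rfl L, Finset.sum_congr rfl R, Finset.sum_comm]

/-- The DFSL operator `L₂` is self-adjoint:
`∑_{s=0}^{N} u(s)·(L₂v)(s) = ∑_{s=0}^{N} v(s)·(L₂u)(s)`. -/
theorem L2_selfAdjoint (μ : ℝ) (hμ0 : 0 < μ) (hμ1 : μ ≤ 1) (N : ℕ) (hN : 0 < N)
    (p q r : ℕ → ℝ) (hp : ∀ t, 0 < p t) (hr : ∀ t, 0 < r t) (u v : ℕ → ℝ) :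
    ∑ s ∈ Finset.range (N + 1), u s * L2 μ N p q v s =
      ∑ s ∈ Finset.range (N + 1), v s * L2 μ N p q u s := by
  simp only [L2, mul_add, Finset.sum_add_distrib]
  have h1 := sum_deltaMinus_eq μ N u (fun τ => p τ * deltaPlusGL μ N v τ)
  have h2 := sum_deltaMinus_eq μ N v (fun τ => p τ * deltaPlusGL μ N u τ)
  rw [h1, h2]
  congr 1
  · apply Finset.sum_congr rfl; intro s _; ring
  · apply Finset.sum_congr rfl; intro s _; ring
end

section
/- Eigenfunctions of the Grünwald–Letnikov discrete fractional Sturm–Liouville equation corresponding to distinct eigenvalues are orthogonal with respect to the weight r: if L₂u(t) = λ_α r(t)u(t) and L₂v(t) = λ_β r(t)v(t) hold for all t in {0,1,…,N}, and λ_α ≠ λ_β, then ∑_{s=0}^{N} r(s)u(s)v(s) = 0. -/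
/-- Summation by parts for the G-L differences. -/
lemma gl_swap (μ : ℝ) (N : ℕ) (f g : ℕ → ℝ) :
    ∑ t ∈ Finset.range (N + 1), g t * deltaMinusGL μ f t
      = ∑ t ∈ Finset.range (N + 1), f t * deltaPlusGL μ N g t := by
  unfold deltaMinusGL deltaPlusGL
  simp only [Finset.mul_sum]
  rw [Finset.sum_sigma', Finset.sum_sigma']
  apply Finset.sum_nbij' (i := fun x => (⟨x.1 - x.2, x.2⟩ : Σ _ : ℕ, ℕ))
    (j := fun x => (⟨x.1 + x.2, x.2⟩ : Σ _ : ℕ, ℕ))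
  case hi =>
    rintro ⟨t, s⟩ h
    simp only [Finset.mem_sigma, Finset.mem_range] at h ⊢
    omega
  case hj =>
    rintro ⟨t, s⟩ h
    simp only [Finset.mem_sigma, Finset.mem_range] at h ⊢
    omega
  case left_neg =>
    rintro ⟨t, s⟩ h
    simp only [Finset.mem_sigma, Finset.mem_range] at h
    simp only [Sigma.mk.inj_iff, heq_eq_eq]
    exact ⟨by omega, trivial⟩
  case right_neg =>
    rintro ⟨t, s⟩ h
    simp only [Finset.mem_sigma, Finset.mem_range] at h
    simp only [Sigma.mk.inj_iff, heq_eq_eq]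
    exact ⟨by omega, trivial⟩
  case h =>
    rintro ⟨t, s⟩ h
    simp only [Finset.mem_sigma, Finset.mem_range] at h
    have : t - s + s = t := by omega
    rw [this]
    ring

/-- Eigenfunctions of the G-L DFSL equation corresponding to distinct eigenvalues
are orthogonal with respect to the weight `r`. -/
theorem L2_eigenfunctions_orthogonal (μ : ℝ) (hμ0 : 0 < μ) (hμ1 : μ ≤ 1)
    (N : ℕ) (hN : 0 < N) (p q r : ℕ → ℝ) (hp : ∀ t, 0 < p t) (hr : ∀ t, 0 < r t)
    (u v : ℕ → ℝ) (lα lβ : ℝ) (hαβ : lα ≠ lβ)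
    (hu : ∀ t ∈ Finset.range (N + 1), L2 μ N p q u t = lα * (r t * u t))
    (hv : ∀ t ∈ Finset.range (N + 1), L2 μ N p q v t = lβ * (r t * v t)) :
    ∑ s ∈ Finset.range (N + 1), r s * u s * v s = 0 := by
  have key : ∑ t ∈ Finset.range (N + 1), v t * L2 μ N p q u t
      = ∑ t ∈ Finset.range (N + 1), u t * L2 μ N p q v t := by
    unfold L2
    simp only [mul_add, Finset.sum_add_distrib]
    congr 1
    · rw [gl_swap, gl_swap]
      exact Finset.sum_congr rfl fun t _ => by ring
    · exact Finset.sum_congr rfl fun t _ => by ring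
  have h1 : ∑ t ∈ Finset.range (N + 1), v t * L2 μ N p q u t
      = lα * ∑ s ∈ Finset.range (N + 1), r s * u s * v s := by
    rw [Finset.mul_sum]
    exact Finset.sum_congr rfl fun t ht => by rw [hu t ht]; ring
  have h2 : ∑ t ∈ Finset.range (N + 1), u t * L2 μ N p q v t
      = lβ * ∑ s ∈ Finset.range (N + 1), r s * u s * v s := by
    rw [Finset.mul_sum]
    exact Finset.sum_congr rfl fun t ht => by rw [hv t ht]; ring
  rw [h1, h2] at key
  have hsub : (lα - lβ) * ∑ s ∈ Finset.range (N + 1), r s * u s * v s = 0 := by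
    rw [sub_mul, key, sub_self]
  rcases mul_eq_zero.mp hsub with h | h
  · exact absurd (sub_eq_zero.mp h) hαβ
  · exact h
end

section
/- All eigenvalues of the Grünwald–Letnikov discrete fractional Sturm–Liouville equation are real: if u is a complex-valued function on {0,1,…,N}, not identically zero, and λ ∈ ℂ satisfies L₂u(t) = λ r(t)u(t) for all t in {0,1,…,N}, then λ is real (its imaginary part vanishes). -/
open Finset

/-- G-L delta left fractional difference (complex-valued). -/
noncomputable def deltaMinusGLC (μ : ℝ) (x : ℕ → ℂ) (t : ℕ) : ℂ :=
  ∑ s ∈ Finset.range (t + 1), (glCoef μ s : ℂ) * x (t - s)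

/-- G-L delta right fractional difference (complex-valued). -/
noncomputable def deltaPlusGLC (μ : ℝ) (N : ℕ) (x : ℕ → ℂ) (t : ℕ) : ℂ :=
  ∑ s ∈ Finset.range (N - t + 1), (glCoef μ s : ℂ) * x (t + s)

/-- The discrete fractional Sturm–Liouville operator `L₂` with real coefficients
`p, q`, acting on complex-valued functions. -/
noncomputable def L2C (μ : ℝ) (N : ℕ) (p q : ℕ → ℝ) (x : ℕ → ℂ) (t : ℕ) : ℂ :=
  deltaMinusGLC μ (fun τ => (p τ : ℂ) * deltaPlusGLC μ N x τ) t + (q t : ℂ) * x t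

private lemma gl_tri (N : ℕ) (F : ℕ → ℕ → ℂ) :
    ∑ t ∈ Finset.range (N+1), ∑ s ∈ Finset.range (t+1), F (t - s) s
  = ∑ τ ∈ Finset.range (N+1), ∑ s ∈ Finset.range (N - τ + 1), F τ s := by
  rw [Finset.sum_sigma', Finset.sum_sigma']
  refine Finset.sum_nbij' (fun x => ⟨x.1 - x.2, x.2⟩) (fun x => ⟨x.1 + x.2, x.2⟩)
    ?_ ?_ ?_ ?_ ?_
  · rintro ⟨a, b⟩ h
    simp only [Finset.mem_sigma, Finset.mem_range] at h ⊢; omega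
  · rintro ⟨a, b⟩ h
    simp only [Finset.mem_sigma, Finset.mem_range] at h ⊢; omega
  · rintro ⟨a, b⟩ h
    simp only [Finset.mem_sigma, Finset.mem_range] at h
    simp only [Sigma.mk.inj_iff]; constructor
    · omega
    · exact HEq.rfl
  · rintro ⟨a, b⟩ h
    simp only [Finset.mem_sigma, Finset.mem_range] at h
    simp only [Sigma.mk.inj_iff]; constructor
    · omega
    · exact HEq.rfl
  · rintro ⟨a, b⟩ h; rfl

/-- Summation by parts: left difference moves to right difference. -/
private lemma gl_parts (μ : ℝ) (N : ℕ) (f g : ℕ → ℂ) :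
    ∑ t ∈ Finset.range (N+1), deltaMinusGLC μ f t * g t
  = ∑ τ ∈ Finset.range (N+1), f τ * deltaPlusGLC μ N g τ := by
  have h1 : ∑ t ∈ Finset.range (N+1), deltaMinusGLC μ f t * g t
      = ∑ t ∈ Finset.range (N+1), ∑ s ∈ Finset.range (t+1),
          (fun τ s => (glCoef μ s : ℂ) * f τ * g (τ + s)) (t - s) s := by
    refine Finset.sum_congr rfl fun t ht => ?_
    rw [deltaMinusGLC, Finset.sum_mul]
    refine Finset.sum_congr rfl fun s hs => ?_
    simp only [Finset.mem_range] at hs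
    show _ = (glCoef μ s : ℂ) * f (t - s) * g (t - s + s)
    rw [Nat.sub_add_cancel (by omega)]
  rw [h1, gl_tri N (fun τ s => (glCoef μ s : ℂ) * f τ * g (τ + s))]
  refine Finset.sum_congr rfl fun τ hτ => ?_
  rw [deltaPlusGLC, Finset.mul_sum]
  refine Finset.sum_congr rfl fun s hs => ?_
  ring

/-- All eigenvalues of the G-L DFSL equation are real. -/
theorem L2_eigenvalues_real (μ : ℝ) (hμ0 : 0 < μ) (hμ1 : μ ≤ 1)
    (N : ℕ) (hN : 0 < N) (p q r : ℕ → ℝ) (hp : ∀ t, 0 < p t) (hr : ∀ t, 0 < r t)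
    (u : ℕ → ℂ) (hu0 : ∃ t ∈ Finset.range (N + 1), u t ≠ 0) (lam : ℂ)
    (hu : ∀ t ∈ Finset.range (N + 1), L2C μ N p q u t = lam * ((r t : ℂ) * u t)) :
    lam.im = 0 := by
  set c := starRingEnd ℂ
  -- conj of deltaPlus
  have hconj : ∀ τ, deltaPlusGLC μ N (fun t => c (u t)) τ = c (deltaPlusGLC μ N u τ) := by
    intro τ
    rw [deltaPlusGLC, deltaPlusGLC, map_sum]
    refine Finset.sum_congr rfl fun s hs => ?_
    rw [map_mul, Complex.conj_ofReal]
  set R : ℝ := ∑ t ∈ Finset.range (N+1), r t * Complex.normSq (u t) with hR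
  set S : ℂ := ∑ t ∈ Finset.range (N+1), L2C μ N p q u t * c (u t) with hS
  have hS1 : S = lam * (R : ℂ) := by
    rw [hS, hR]
    push_cast
    rw [Finset.mul_sum]
    refine Finset.sum_congr rfl fun t ht => ?_
    rw [hu t ht]
    have : (u t) * c (u t) = (Complex.normSq (u t) : ℂ) := Complex.mul_conj (u t)
    calc lam * ((r t : ℂ) * u t) * c (u t)
        = lam * ((r t : ℂ) * (u t * c (u t))) := by ring
      _ = lam * ((r t : ℂ) * (Complex.normSq (u t) : ℂ)) := by rw [this]
  have hS2 : S = ((∑ τ ∈ Finset.range (N+1),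
        p τ * Complex.normSq (deltaPlusGLC μ N u τ)
      + ∑ t ∈ Finset.range (N+1), q t * Complex.normSq (u t) : ℝ) : ℂ) := by
    rw [hS]
    have expand : ∑ t ∈ Finset.range (N+1), L2C μ N p q u t * c (u t)
        = (∑ t ∈ Finset.range (N+1),
            deltaMinusGLC μ (fun τ => (p τ : ℂ) * deltaPlusGLC μ N u τ) t * c (u t))
        + ∑ t ∈ Finset.range (N+1), (q t : ℂ) * (u t * c (u t)) := by
      rw [← Finset.sum_add_distrib]
      refine Finset.sum_congr rfl fun t ht => ?_
      rw [L2C]; ring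
    rw [expand, gl_parts μ N _ (fun t => c (u t))]
    push_cast
    congr 1
    · refine Finset.sum_congr rfl fun τ hτ => ?_
      rw [hconj τ]
      calc (p τ : ℂ) * deltaPlusGLC μ N u τ * c (deltaPlusGLC μ N u τ)
          = (p τ : ℂ) * (deltaPlusGLC μ N u τ * c (deltaPlusGLC μ N u τ)) := by ring
        _ = (p τ : ℂ) * (Complex.normSq (deltaPlusGLC μ N u τ) : ℂ) := by
            rw [Complex.mul_conj]
    · refine Finset.sum_congr rfl fun t ht => ?_
      rw [Complex.mul_conj]
  have hSim : S.im = 0 := by rw [hS2]; exact Complex.ofReal_im _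
  have hRpos : 0 < R := by
    obtain ⟨t0, ht0, hu0⟩ := hu0
    refine Finset.sum_pos' (fun t ht => ?_) ⟨t0, ht0, ?_⟩
    · exact mul_nonneg (hr t).le (Complex.normSq_nonneg _)
    · exact mul_pos (hr t0) (Complex.normSq_pos.mpr hu0)
  have : (lam * (R : ℂ)).im = lam.im * R := by
    simp [Complex.mul_im]
  rw [hS1, this] at hSim
  exact (mul_eq_zero.mp hSim).resolve_right (ne_of_gt hRpos)
end

section
/- Summation by parts for Grünwald–Letnikov delta fractional differences: for any 0 < μ ≤ 1 and any real-valued functions u, v defined on {0,1,…,N}, one has ∑_{s=0}^{N} u(s)·Δ₋^μ v(s) = ∑_{s=0}^{N} v(s)·Δ₊^μ u(s). -/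
/-- Summation by parts for G-L delta fractional differences:
`∑_{s=0}^{N} u(s)·Δ₋^μ v(s) = ∑_{s=0}^{N} v(s)·Δ₊^μ u(s)`. -/
theorem GL_summation_by_parts (μ : ℝ) (hμ0 : 0 < μ) (hμ1 : μ ≤ 1)
    (N : ℕ) (hN : 0 < N) (u v : ℕ → ℝ) :
    ∑ s ∈ Finset.range (N + 1), u s * deltaMinusGL μ v s =
      ∑ s ∈ Finset.range (N + 1), v s * deltaPlusGL μ N u s := by
  have LHS : ∑ s ∈ Finset.range (N + 1), u s * deltaMinusGL μ v s =
      ∑ t ∈ Finset.range (N + 1), ∑ j ∈ Finset.range (t + 1),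
        u t * (glCoef μ (t - j) * v j) := by
    refine Finset.sum_congr rfl fun t _ => ?_
    rw [deltaMinusGL, Finset.mul_sum]
    rw [← Finset.sum_range_reflect (fun j => u t * (glCoef μ (t - j) * v j)) (t + 1)]
    refine Finset.sum_congr rfl fun s hs => ?_
    have hs' : s ≤ t := Nat.lt_succ_iff.mp (Finset.mem_range.mp hs)
    have h1 : t + 1 - 1 - s = t - s := by omega
    have h2 : t - (t - s) = s := by omega
    rw [h1, h2]
  have RHS : ∑ s ∈ Finset.range (N + 1), v s * deltaPlusGL μ N u s =
      ∑ j ∈ Finset.range (N + 1), ∑ t ∈ Finset.Ico j (N + 1),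
        u t * (glCoef μ (t - j) * v j) := by
    refine Finset.sum_congr rfl fun j hj => ?_
    have hj' : j ≤ N := Nat.lt_succ_iff.mp (Finset.mem_range.mp hj)
    rw [deltaPlusGL, Finset.mul_sum, Finset.sum_Ico_eq_sum_range]
    have hN' : N + 1 - j = N - j + 1 := by omega
    rw [hN']
    refine Finset.sum_congr rfl fun s _ => ?_
    have : j + s - j = s := by omega
    rw [this]
    ring
  rw [LHS, RHS]
  refine Finset.sum_comm' ?_
  intro t j
  simp only [Finset.mem_range, Finset.mem_Ico]
  omega
end

section
/- Summation by parts for nabla Riemann–Liouville fractional differences: for any 0 < μ < 1, integers a < b, and real-valued functions u, v on the integers, one has ∑_{s=a+1}^{b−1} u(s)·∇_a^μ v(s) = ∑_{s=a+1}^{b−1} v(s)·(_b∇^μ u)(s). -/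
/-- Summation by parts for nabla Riemann–Liouville fractional differences:
`∑_{s=a+1}^{b−1} u(s)·∇_a^μ v(s) = ∑_{s=a+1}^{b−1} v(s)·(_b∇^μ u)(s)`. -/
theorem RL_summation_by_parts (μ : ℝ) (hμ0 : 0 < μ) (hμ1 : μ < 1)
    (a b : ℤ) (hab : a < b) (u v : ℤ → ℝ) :
    ∑ s ∈ Finset.Icc (a + 1) (b - 1), u s * nablaLeftRL μ a v s =
      ∑ s ∈ Finset.Icc (a + 1) (b - 1), v s * nablaRightRL μ b u s := by
  set c : ℝ := 1 / Real.Gamma (1 - μ) with hc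
  set I : Finset ℤ := Finset.Icc (a + 1) (b - 1) with hI
  -- canonical double sums
  set S1 : ℝ := ∑ t ∈ I, ∑ s ∈ Finset.Icc (a + 1) t,
      u t * v s * risingFac ((t - s + 1 : ℤ) : ℝ) (-μ) with hS1
  set S2 : ℝ := ∑ t ∈ I, ∑ s ∈ Finset.Icc (a + 1) (t - 1),
      u t * v s * risingFac ((t - s : ℤ) : ℝ) (-μ) with hS2
  have h1 : S1 = ∑ s ∈ I, ∑ t ∈ Finset.Icc s (b - 1),
      u t * v s * risingFac ((t - s + 1 : ℤ) : ℝ) (-μ) := by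
    rw [hS1]
    apply Finset.sum_comm'
    intro x y
    simp only [hI, Finset.mem_Icc]
    omega
  have h2 : S2 = ∑ s ∈ I, ∑ t ∈ Finset.Icc (s + 1) (b - 1),
      u t * v s * risingFac ((t - s : ℤ) : ℝ) (-μ) := by
    rw [hS2]
    apply Finset.sum_comm'
    intro x y
    simp only [hI, Finset.mem_Icc]
    omega
  have hL : ∑ s ∈ I, u s * nablaLeftRL μ a v s = c * S1 - c * S2 := by
    rw [hS1, hS2, Finset.mul_sum, Finset.mul_sum, ← Finset.sum_sub_distrib]
    apply Finset.sum_congr rfl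
    intro t ht
    rw [nablaLeftRL, mul_sub, ← hc, Finset.mul_sum, Finset.mul_sum,
      Finset.mul_sum, Finset.mul_sum]
    congr 1
    · rw [Finset.mul_sum]
      apply Finset.sum_congr rfl
      intro s hs
      have : ((t - (s - 1) : ℤ) : ℝ) = ((t - s + 1 : ℤ) : ℝ) := by congr 1; omega
      rw [this]; ring
    · rw [Finset.mul_sum]
      apply Finset.sum_congr rfl
      intro s hs
      have : (((t - 1) - (s - 1) : ℤ) : ℝ) = ((t - s : ℤ) : ℝ) := by congr 1; omega
      rw [this]; ring
  have hR : ∑ s ∈ I, v s * nablaRightRL μ b u s = c * S1 - c * S2 := by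
    rw [h1, h2, Finset.mul_sum, Finset.mul_sum, ← Finset.sum_sub_distrib]
    apply Finset.sum_congr rfl
    intro t ht
    rw [nablaRightRL, ← hc, neg_sub, mul_sub, Finset.mul_sum, Finset.mul_sum,
      Finset.mul_sum, Finset.mul_sum]
    congr 1
    · rw [Finset.mul_sum]
      apply Finset.sum_congr rfl
      intro s hs
      have : ((s - (t - 1) : ℤ) : ℝ) = ((s - t + 1 : ℤ) : ℝ) := by congr 1; omega
      rw [this]; ring
    · rw [Finset.mul_sum]
      apply Finset.sum_congr rfl
      intro s hs
      have : ((s - ((t + 1) - 1) : ℤ) : ℝ) = ((s - t : ℤ) : ℝ) := by congr 1; omega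
      rw [this]; ring
  rw [hL, hR]
end
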